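/- Effective resistance is a metric on the vertices of a finite connected graph: it is nonnegative, zero iff the vertices coincide, symmetric, and satisfies the triangle inequality. -/

import Mathlib

open Matrix Finset

/-- `Ld` is the Moore–Penrose pseudoinverse of `L`. -/
def IsMoorePenrose {V : Type*} [Fintype V] (L Ld : Matrix V V ℝ) : Prop :=
  L * Ld * L = L ∧ Ld * L * Ld = Ld ∧ (L * Ld)ᵀ = L * Ld ∧ (Ld * L)ᵀ = Ld * L

/-- The Laplacian of the weighted graph with weights `w`. -/
def lapOf {V : Type*} [Fintype V] [DecidableEq V] (w : V → V → ℝ) : Matrix V V ℝ :=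
  Matrix.of fun u v => if u = v then ∑ x, w u x else -(w u v)

/-- Effective resistance `(1_u − 1_v)ᵀ Ld (1_u − 1_v)` w.r.t. a pseudoinverse `Ld`. -/
def effRes {V : Type*} [Fintype V] [DecidableEq V] (Ld : Matrix V V ℝ) (u v : V) : ℝ :=
  (Pi.single u (1 : ℝ) - Pi.single v 1) ⬝ᵥ
    Ld.mulVec (Pi.single u (1 : ℝ) - Pi.single v 1)

section Aux
variable {V : Type*} [Fintype V] [DecidableEq V] (w : V → V → ℝ)

lemma lap_mulVec (hw_diag : ∀ u, w u u = 0) (x : V → ℝ) (u : V) :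
    (lapOf w).mulVec x u = ∑ z, w u z * (x u - x z) := by
  simp only [lapOf, mulVec, dotProduct, of_apply]
  have h : ∀ z, (if u = z then ∑ t, w u t else -(w u z)) * x z
      = (if u = z then (∑ t, w u t) * x u else 0) + (-(w u z) * x z) := by
    intro z
    by_cases h : u = z
    · subst h; simp [hw_diag u]
    · simp [h]
  rw [Finset.sum_congr rfl (fun z _ => h z), Finset.sum_add_distrib,
    Finset.sum_ite_eq]
  simp only [Finset.mem_univ, if_true]
  rw [Finset.sum_mul, ← Finset.sum_add_distrib]
  exact Finset.sum_congr rfl fun z _ => by ring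

lemma lap_colsum (hw_sym : ∀ u v, w u v = w v u) (hw_diag : ∀ u, w u u = 0) (v : V) :
    ∑ u, lapOf w u v = 0 := by
  simp only [lapOf, of_apply]
  have h : ∀ u, (if u = v then ∑ t, w u t else -(w u v))
      = (if u = v then ∑ t, w v t else 0) + (-(w u v)) := by
    intro u
    by_cases h : u = v
    · subst h; simp [hw_diag u]
    · simp [h]
  rw [Finset.sum_congr rfl (fun u _ => h u), Finset.sum_add_distrib,
    Finset.sum_ite_eq']
  simp [fun u => hw_sym u v]

lemma lap_sum_mulVec (hw_sym : ∀ u v, w u v = w v u) (hw_diag : ∀ u, w u u = 0)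
    (x : V → ℝ) : ∑ u, (lapOf w).mulVec x u = 0 := by
  simp only [mulVec, dotProduct]
  rw [Finset.sum_comm]
  refine Finset.sum_eq_zero fun z _ => ?_
  rw [← Finset.sum_mul, lap_colsum w hw_sym hw_diag z, zero_mul]

lemma lap_quad (hw_sym : ∀ u v, w u v = w v u) (hw_diag : ∀ u, w u u = 0)
    (x : V → ℝ) :
    2 * (x ⬝ᵥ (lapOf w).mulVec x) = ∑ u, ∑ z, w u z * (x u - x z) ^ 2 := by
  have hQ : x ⬝ᵥ (lapOf w).mulVec x = ∑ u, ∑ z, w u z * (x u - x z) * x u := by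
    simp only [dotProduct]
    refine Finset.sum_congr rfl fun u _ => ?_
    rw [lap_mulVec w hw_diag, Finset.mul_sum]
    exact Finset.sum_congr rfl fun z _ => by ring
  have hQ' : x ⬝ᵥ (lapOf w).mulVec x = ∑ u, ∑ z, w u z * (x z - x u) * x z := by
    rw [hQ, Finset.sum_comm]
    exact Finset.sum_congr rfl fun u _ => Finset.sum_congr rfl fun z _ => by
      rw [hw_sym z u]
  calc 2 * (x ⬝ᵥ (lapOf w).mulVec x)
      = (∑ u, ∑ z, w u z * (x u - x z) * x u) + ∑ u, ∑ z, w u z * (x z - x u) * x z := by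
        rw [← hQ, ← hQ']; ring
    _ = ∑ u, ∑ z, w u z * (x u - x z) ^ 2 := by
        rw [← Finset.sum_add_distrib]
        refine Finset.sum_congr rfl fun u _ => ?_
        rw [← Finset.sum_add_distrib]
        exact Finset.sum_congr rfl fun z _ => by ring

lemma lap_quad_nonneg (hw_sym : ∀ u v, w u v = w v u) (hw_nonneg : ∀ u v, 0 ≤ w u v)
    (hw_diag : ∀ u, w u u = 0) (x : V → ℝ) :
    0 ≤ x ⬝ᵥ (lapOf w).mulVec x := by
  have h := lap_quad w hw_sym hw_diag x
  have h2 : (0:ℝ) ≤ ∑ u, ∑ z, w u z * (x u - x z) ^ 2 :=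
    Finset.sum_nonneg fun u _ => Finset.sum_nonneg fun z _ =>
      mul_nonneg (hw_nonneg u z) (sq_nonneg _)
  linarith

lemma lap_quad_eq_zero (hw_sym : ∀ u v, w u v = w v u) (hw_nonneg : ∀ u v, 0 ≤ w u v)
    (hw_diag : ∀ u, w u u = 0) (x : V → ℝ)
    (hx : x ⬝ᵥ (lapOf w).mulVec x = 0) : (lapOf w).mulVec x = 0 := by
  have h := lap_quad w hw_sym hw_diag x
  rw [hx, mul_zero] at h
  have hterm : ∀ u ∈ Finset.univ (α := V), ∀ z ∈ Finset.univ (α := V),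
      w u z * (x u - x z) ^ 2 = 0 := by
    have h1 := (Finset.sum_eq_zero_iff_of_nonneg (fun u _ =>
      Finset.sum_nonneg fun z _ => mul_nonneg (hw_nonneg u z) (sq_nonneg _))).mp h.symm
    intro u hu z hz
    exact (Finset.sum_eq_zero_iff_of_nonneg (fun z _ =>
      mul_nonneg (hw_nonneg u z) (sq_nonneg _))).mp (h1 u hu) z hz
  funext u
  rw [lap_mulVec w hw_diag, Pi.zero_apply]
  refine Finset.sum_eq_zero fun z _ => ?_
  rcases mul_eq_zero.mp (hterm u (Finset.mem_univ u) z (Finset.mem_univ z)) with h0 | h0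
  · rw [h0, zero_mul]
  · rw [pow_eq_zero_iff (two_ne_zero)] at h0
    rw [h0, mul_zero]

lemma lap_symm (hw_sym : ∀ u v, w u v = w v u) : (lapOf w)ᵀ = lapOf w := by
  ext u v
  simp only [lapOf, transpose_apply, of_apply]
  by_cases h : u = v
  · subst h; simp
  · rw [if_neg (fun h' => h h'.symm), if_neg h, hw_sym]

lemma lap_proj [Nonempty V] (hw_sym : ∀ u v, w u v = w v u) (hw_diag : ∀ u, w u u = 0)
    (hconn : ∀ x : V → ℝ, (lapOf w).mulVec x = 0 → ∃ c, ∀ i, x i = c)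
    (Ld : Matrix V V ℝ) (hLd : IsMoorePenrose (lapOf w) Ld)
    (b : V → ℝ) (hb : ∑ i, b i = 0) :
    (lapOf w).mulVec (Ld.mulVec b) = b := by
  set L := lapOf w
  have hsymL : Lᵀ = L := lap_symm w hw_sym
  have hLL : L * L * Ld = L := by
    have h1 : (L * L * Ld)ᵀ = L := by
      rw [Matrix.mul_assoc, Matrix.transpose_mul, hLd.2.2.1, hsymL]
      exact hLd.1
    calc L * L * Ld = ((L * L * Ld)ᵀ)ᵀ := (Matrix.transpose_transpose _).symm
      _ = Lᵀ := by rw [h1]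
      _ = L := hsymL
  have hr : L.mulVec (b - L.mulVec (Ld.mulVec b)) = 0 := by
    rw [mulVec_sub, mulVec_mulVec, mulVec_mulVec, hLL, sub_self]
  obtain ⟨c, hc⟩ := hconn _ hr
  have hsum : ∑ i, (b - L.mulVec (Ld.mulVec b)) i = 0 := by
    simp only [Pi.sub_apply, Finset.sum_sub_distrib, hb,
      lap_sum_mulVec w hw_sym hw_diag, sub_zero]
    exact sub_eq_zero.mpr (lap_sum_mulVec w hw_sym hw_diag _).symm
  have hc0 : c = 0 := by
    rw [Finset.sum_congr rfl (fun i _ => hc i), Finset.sum_const, nsmul_eq_mul] at hsum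
    have hcard : (0:ℝ) < ((Finset.univ (α := V)).card : ℝ) := by
      exact_mod_cast Finset.card_pos.mpr (Finset.univ_nonempty (α := V))
    rcases mul_eq_zero.mp hsum with h | h
    · exact absurd h (ne_of_gt hcard)
    · exact h
  funext i
  have := hc i
  rw [hc0] at this
  have : b i - L.mulVec (Ld.mulVec b) i = 0 := this
  linarith

lemma lap_min_principle (hw_sym : ∀ u v, w u v = w v u) (hw_nonneg : ∀ u v, 0 ≤ w u v)
    (hw_diag : ∀ u, w u u = 0)
    (hconn : ∀ x : V → ℝ, (lapOf w).mulVec x = 0 → ∃ c, ∀ i, x i = c)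
    (φ : V → ℝ) (s t : V)
    (hφ : (lapOf w).mulVec φ = Pi.single s 1 - Pi.single t 1) :
    ∀ z, φ t ≤ φ z := by
  classical
  have : Nonempty V := ⟨t⟩
  obtain ⟨t', -, ht'⟩ := Finset.exists_min_image Finset.univ φ ⟨t, Finset.mem_univ t⟩
  have ht'min : ∀ z, φ t' ≤ φ z := fun z => ht' z (Finset.mem_univ z)
  set p : V → Prop := fun y => φ y ≤ φ t' with hp
  have claimA : ∀ y, p y → y ≠ t → ∀ z, 0 < w y z → p z := by
    intro y hy hyt z hwz
    have hrow : ∑ z, w y z * (φ y - φ z)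
        = (Pi.single s 1 : V → ℝ) y - (Pi.single t 1 : V → ℝ) y := by
      rw [← lap_mulVec w hw_diag, hφ]; rfl
    have hge : (0:ℝ) ≤ (Pi.single s 1 : V → ℝ) y - (Pi.single t 1 : V → ℝ) y := by
      rw [Pi.single_apply, Pi.single_apply, if_neg hyt]
      split <;> norm_num
    have hterm_nonpos : ∀ z ∈ Finset.univ (α := V), w y z * (φ y - φ z) ≤ 0 := by
      intro z _
      apply mul_nonpos_of_nonneg_of_nonpos (hw_nonneg y z)
      have := ht'min z
      have hy' : φ y ≤ φ t' := hy
      linarith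
    have hsum0 : ∑ z, w y z * (φ y - φ z) = 0 :=
      le_antisymm (Finset.sum_nonpos hterm_nonpos) (hrow ▸ hge)
    have hall := (Finset.sum_eq_zero_iff_of_nonpos hterm_nonpos).mp hsum0
    have h0 := hall z (Finset.mem_univ z)
    have : φ y - φ z = 0 := by
      rcases mul_eq_zero.mp h0 with h | h
      · exact absurd h (ne_of_gt hwz)
      · exact h
    have hy' : φ y ≤ φ t' := hy
    show φ z ≤ φ t'
    linarith
  by_cases hpt : p t
  · intro z; exact le_trans hpt (ht'min z)
  · exfalso
    set g : V → ℝ := fun z => if p z then 1 else 0 with hg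
    have hker : (lapOf w).mulVec g = 0 := by
      funext y
      rw [lap_mulVec w hw_diag, Pi.zero_apply]
      refine Finset.sum_eq_zero fun z _ => ?_
      by_cases hpy : p y
      · rcases eq_or_lt_of_le (hw_nonneg y z) with h | h
        · rw [← h, zero_mul]
        · have hpz : p z := claimA y hpy (fun h => hpt (h ▸ hpy)) z h
          simp [hg, hpy, hpz]
      · by_cases hpz : p z
        · rcases eq_or_lt_of_le (hw_nonneg z y) with h | h
          · rw [hw_sym y z, ← h, zero_mul]
          · exact absurd (claimA z hpz (fun hzt => hpt (hzt ▸ hpz)) y h) hpy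
        · simp [hg, hpy, hpz]
    obtain ⟨c, hc⟩ := hconn g hker
    have h1 : g t' = 1 := by simp [hg, hp]
    have h0 : g t = 0 := by simp [hg, hpt]
    rw [hc t'] at h1; rw [hc t] at h0
    rw [h1] at h0
    exact one_ne_zero h0

end Aux

/-- Effective resistance is a metric on the vertices of a finite connected weighted graph:
nonnegative, zero iff the vertices coincide, symmetric, and satisfying the triangle
inequality.  Connectivity is expressed by the kernel of the Laplacian consisting exactly
of the constant vectors. -/
theorem effRes_is_metric {V : Type*} [Fintype V] [DecidableEq V]
    (w : V → V → ℝ) (hw_sym : ∀ u v, w u v = w v u)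
    (hw_nonneg : ∀ u v, 0 ≤ w u v) (hw_diag : ∀ u, w u u = 0)
    (hconn : ∀ x : V → ℝ, (lapOf w).mulVec x = 0 → ∃ c, ∀ i, x i = c)
    (Ld : Matrix V V ℝ) (hLd : IsMoorePenrose (lapOf w) Ld) :
    (∀ u v, 0 ≤ effRes Ld u v) ∧
    (∀ u v, effRes Ld u v = 0 ↔ u = v) ∧
    (∀ u v, effRes Ld u v = effRes Ld v u) ∧
    (∀ u v x, effRes Ld u x ≤ effRes Ld u v + effRes Ld v x) := by
  classical
  have hδsum : ∀ u v : V, ∑ i, (Pi.single u 1 - Pi.single v 1 : V → ℝ) i = 0 := by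
    intro u v
    simp [Finset.sum_sub_distrib, Finset.sum_pi_single]
  have key : ∀ u v : V,
      (lapOf w).mulVec (Ld.mulVec ((Pi.single u 1 : V → ℝ) - Pi.single v 1))
        = Pi.single u (1:ℝ) - Pi.single v 1 := by
    intro u v
    have : Nonempty V := ⟨u⟩
    exact lap_proj w hw_sym hw_diag hconn Ld hLd _ (hδsum u v)
  have hnonneg : ∀ u v, 0 ≤ effRes Ld u v := by
    intro u v
    set δ := ((Pi.single u 1 : V → ℝ) - Pi.single v 1) with hδdef
    set y := Ld.mulVec δ with hydef
    calc (0:ℝ) ≤ y ⬝ᵥ (lapOf w).mulVec y :=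
          lap_quad_nonneg w hw_sym hw_nonneg hw_diag y
      _ = ((lapOf w).mulVec y) ⬝ᵥ y := dotProduct_comm _ _
      _ = δ ⬝ᵥ y := by rw [key u v]
      _ = effRes Ld u v := rfl
  have hquad_eq : ∀ u v : V,
      effRes Ld u v = (Ld.mulVec ((Pi.single u 1 : V → ℝ) - Pi.single v 1)) ⬝ᵥ
        (lapOf w).mulVec (Ld.mulVec ((Pi.single u 1 : V → ℝ) - Pi.single v 1)) := by
    intro u v
    set δ := ((Pi.single u 1 : V → ℝ) - Pi.single v 1) with hδdef
    set y := Ld.mulVec δ with hydef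
    calc effRes Ld u v = δ ⬝ᵥ y := rfl
      _ = ((lapOf w).mulVec y) ⬝ᵥ y := by rw [key u v]
      _ = y ⬝ᵥ (lapOf w).mulVec y := dotProduct_comm _ _
  refine ⟨hnonneg, ?_, ?_, ?_⟩
  · -- zero iff equal
    intro u v
    constructor
    · intro h
      set δ := ((Pi.single u 1 : V → ℝ) - Pi.single v 1) with hδdef
      set y := Ld.mulVec δ with hydef
      have hq : y ⬝ᵥ (lapOf w).mulVec y = 0 := by
        rw [← hquad_eq u v]; exact h
      have hLy : (lapOf w).mulVec y = 0 :=
        lap_quad_eq_zero w hw_sym hw_nonneg hw_diag y hq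
      have hδ0 : δ = 0 := by
        rw [hδdef, ← key u v, ← hδdef, ← hydef]; exact hLy
      by_contra hne
      have h1 := congrFun hδ0 u
      simp only [hδdef, Pi.sub_apply, Pi.single_apply, if_pos rfl, Pi.zero_apply] at h1
      rw [if_neg (fun hh : u = v => hne hh)] at h1
      norm_num at h1
    · rintro rfl
      simp [effRes]
  · -- symmetry
    intro u v
    have h : ((Pi.single v 1 : V → ℝ) - Pi.single u 1)
        = -((Pi.single u 1 : V → ℝ) - Pi.single v 1) := by rw [neg_sub]
    rw [effRes, effRes, h, mulVec_neg, neg_dotProduct, dotProduct_neg, neg_neg]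
  · -- triangle inequality
    intro u v x
    set a := ((Pi.single u 1 : V → ℝ) - Pi.single v 1) with hadef
    set b := ((Pi.single v 1 : V → ℝ) - Pi.single x 1) with hbdef
    have hsplit : ((Pi.single u 1 : V → ℝ) - Pi.single x 1) = a + b :=
      (sub_add_sub_cancel _ _ _).symm
    have h1 : a ⬝ᵥ Ld.mulVec b ≤ 0 := by
      set φ := Ld.mulVec b with hφdef
      have hφ : (lapOf w).mulVec φ = b := key v x
      have hneg : (lapOf w).mulVec (-φ) = Pi.single x 1 - Pi.single v 1 := by
        rw [mulVec_neg, hφ, hbdef, neg_sub]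
      have hmax := lap_min_principle w hw_sym hw_nonneg hw_diag hconn (-φ) x v hneg
      have hu : φ u ≤ φ v := by have := hmax u; simpa using this
      have ha : a ⬝ᵥ φ = φ u - φ v := by
        rw [hadef, sub_dotProduct, _root_.single_dotProduct, _root_.single_dotProduct,
          one_mul, one_mul]
      rw [ha]
      linarith
    have h2 : b ⬝ᵥ Ld.mulVec a ≤ 0 := by
      set ψ := Ld.mulVec a with hψdef
      have hψ : (lapOf w).mulVec ψ = a := key u v
      have hmin := lap_min_principle w hw_sym hw_nonneg hw_diag hconn ψ u v hψ
      have hb : b ⬝ᵥ ψ = ψ v - ψ x := by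
        rw [hbdef, sub_dotProduct, _root_.single_dotProduct, _root_.single_dotProduct,
          one_mul, one_mul]
      rw [hb]
      have := hmin x
      linarith
    have e1 : effRes Ld u x = a ⬝ᵥ Ld.mulVec a + a ⬝ᵥ Ld.mulVec b
        + b ⬝ᵥ Ld.mulVec a + b ⬝ᵥ Ld.mulVec b := by
      simp only [effRes, hsplit, mulVec_add, add_dotProduct, dotProduct_add]
      ring
    have e2 : effRes Ld u v = a ⬝ᵥ Ld.mulVec a := rfl
    have e3 : effRes Ld v x = b ⬝ᵥ Ld.mulVec b := rfl
    rw [e1, e2, e3]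
    linarith
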